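/- Let U ⊆ ℂ be a connected open set and let f, g, h : U → ℂ be holomorphic functions with g nonconstant. Then ⟨1,f⟩ + ⟨g,h⟩ = 0 identically on U (that is, Re f + Re(ḡh) ≡ 0) if and only if there exist real constants c₁, c₂ and a complex constant z₁ such that h = i c₁ g + z₁ and f = −z̄₁ g + i c₂ on U. -/

import Mathlib

open Complex

noncomputable section

/-- Euclidean inner product on ℂ ≅ ℝ²: ⟨w₁,w₂⟩ = Re(w̄₁ w₂). -/
def inn (w₁ w₂ : ℂ) : ℝ := ((starRingEnd ℂ) w₁ * w₂).re

/-- Partial derivative in u (z = u + iv). -/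
def pd1 (f : ℂ → ℝ) (z : ℂ) : ℝ := fderiv ℝ f z 1
/-- Partial derivative in v (z = u + iv). -/
def pd2 (f : ℂ → ℝ) (z : ℂ) : ℝ := fderiv ℝ f z Complex.I
/-- Euclidean Laplacian Δf = f_{,11} + f_{,22}. -/
def lap (f : ℂ → ℝ) (z : ℂ) : ℝ := pd1 (pd1 f) z + pd2 (pd2 f) z

/-- Partial derivative in u of an ℝ³ ≅ ℂ × ℝ valued map. -/
def pdv1 (f : ℂ → ℂ × ℝ) (z : ℂ) : ℂ × ℝ := fderiv ℝ f z 1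
/-- Partial derivative in v of an ℝ³ ≅ ℂ × ℝ valued map. -/
def pdv2 (f : ℂ → ℂ × ℝ) (z : ℂ) : ℂ × ℝ := fderiv ℝ f z Complex.I
/-- Euclidean inner product on ℝ³ ≅ ℂ × ℝ. -/
def inn3 (p q : ℂ × ℝ) : ℝ := inn p.1 q.1 + p.2 * q.2

/-- directional derivative of `f + conj g * h` -/
lemma hasFDerivAt_comb {f g h : ℂ → ℂ} {f' g' h' : ℂ} {z : ℂ}
    (hf : HasDerivAt f f' z) (hg : HasDerivAt g g' z) (hh : HasDerivAt h h' z) :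
    ∃ L : ℂ →L[ℝ] ℂ, HasFDerivAt (fun w => f w + (starRingEnd ℂ) (g w) * h w) L z ∧
      ∀ w, L w = f' * w + (starRingEnd ℂ) (g' * w) * h z + (starRingEnd ℂ) (g z) * (h' * w) := by
  have hfd := (hf.hasFDerivAt).restrictScalars ℝ
  have hgd := (hg.hasFDerivAt).restrictScalars ℝ
  have hhd := (hh.hasFDerivAt).restrictScalars ℝ
  have hcg : HasFDerivAt (fun w => (starRingEnd ℂ) (g w))
      ((Complex.conjCLE.toContinuousLinearMap).comp
        ((ContinuousLinearMap.smulRight (1 : ℂ →L[ℂ] ℂ) g').restrictScalars ℝ)) z :=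
    (Complex.conjCLE.toContinuousLinearMap.hasFDerivAt).comp z hgd
  have hmul := hcg.mul hhd
  refine ⟨_, hfd.add hmul, fun w => ?_⟩
  simp [ContinuousLinearMap.smul_apply, smul_eq_mul]
  ring

lemma hasFDerivAt_comb2 {p g q r h : ℂ → ℂ} {p' g' q' r' h' : ℂ} {z : ℂ}
    (hp : HasDerivAt p p' z) (hg : HasDerivAt g g' z) (hq : HasDerivAt q q' z)
    (hr : HasDerivAt r r' z) (hh : HasDerivAt h h' z) :
    ∃ L : ℂ →L[ℝ] ℂ,
      HasFDerivAt (fun w => p w + (starRingEnd ℂ) (g w) * q w + r w * (starRingEnd ℂ) (h w)) L z ∧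
      ∀ w, L w = p' * w + (starRingEnd ℂ) (g' * w) * q z + (starRingEnd ℂ) (g z) * (q' * w)
        + (r' * w) * (starRingEnd ℂ) (h z) + r z * (starRingEnd ℂ) (h' * w) := by
  have hpd := (hp.hasFDerivAt).restrictScalars ℝ
  have hgd := (hg.hasFDerivAt).restrictScalars ℝ
  have hqd := (hq.hasFDerivAt).restrictScalars ℝ
  have hrd := (hr.hasFDerivAt).restrictScalars ℝ
  have hhd := (hh.hasFDerivAt).restrictScalars ℝ
  have hcg : HasFDerivAt (fun w => (starRingEnd ℂ) (g w))
      ((Complex.conjCLE.toContinuousLinearMap).comp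
        ((ContinuousLinearMap.smulRight (1 : ℂ →L[ℂ] ℂ) g').restrictScalars ℝ)) z :=
    (Complex.conjCLE.toContinuousLinearMap.hasFDerivAt).comp z hgd
  have hch : HasFDerivAt (fun w => (starRingEnd ℂ) (h w))
      ((Complex.conjCLE.toContinuousLinearMap).comp
        ((ContinuousLinearMap.smulRight (1 : ℂ →L[ℂ] ℂ) h').restrictScalars ℝ)) z :=
    (Complex.conjCLE.toContinuousLinearMap.hasFDerivAt).comp z hhd
  refine ⟨_, (hpd.add (hcg.mul hqd)).add (hrd.mul hch), fun w => ?_⟩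
  simp [ContinuousLinearMap.smul_apply, smul_eq_mul]
  ring

lemma re_deriv_zero {φ : ℂ → ℂ} {L : ℂ →L[ℝ] ℂ} {z : ℂ} (hφ : HasFDerivAt φ L z)
    (h0 : ∀ᶠ w in nhds z, (φ w).re = 0) : ∀ w, (L w).re = 0 := by
  have hψ : HasFDerivAt (fun w => (φ w).re) ((Complex.reCLM).comp L) z :=
    (Complex.reCLM.hasFDerivAt).comp z hφ
  have heq : (fun w => (φ w).re) =ᶠ[nhds z] (fun _ => (0:ℝ)) := h0
  have : (Complex.reCLM).comp L = 0 := by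
    rw [← hψ.fderiv, heq.fderiv_eq]; simp
  intro w
  have := congrFun (congrArg DFunLike.coe this) w
  simpa using this

lemma full_deriv_zero {φ : ℂ → ℂ} {L : ℂ →L[ℝ] ℂ} {z : ℂ} (hφ : HasFDerivAt φ L z)
    (h0 : ∀ᶠ w in nhds z, φ w = 0) : ∀ w, L w = 0 := by
  have heq : φ =ᶠ[nhds z] (fun _ => (0:ℂ)) := h0
  have : L = 0 := by
    have := hφ.fderiv
    rw [heq.fderiv_eq] at this; symm; simpa using this
  intro w; rw [this]; rfl

/-- holomorphic with vanishing real part has zero derivative -/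
lemma deriv_zero_of_re_zero {V : Set ℂ} (hV : IsOpen V) {r : ℂ → ℂ}
    (hr : DifferentiableOn ℂ r V) (hre : ∀ z ∈ V, (r z).re = 0) :
    ∀ z ∈ V, deriv r z = 0 := by
  intro z hz
  have hd : HasDerivAt r (deriv r z) z :=
    ((hr.differentiableAt (hV.mem_nhds hz))).hasDerivAt
  have hfd := (hd.hasFDerivAt).restrictScalars ℝ
  have h0 : ∀ᶠ w in nhds z, (r w).re = 0 :=
    Filter.eventually_iff_exists_mem.2 ⟨V, hV.mem_nhds hz, hre⟩
  have key := re_deriv_zero hfd h0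
  have h1 := key 1
  have h2 := key Complex.I
  simp [ContinuousLinearMap.smul_apply, smul_eq_mul] at h1 h2
  exact Complex.ext h1 (by simpa using h2)

/-- a function with zero derivative on an open convex set is constant there -/
lemma const_on_convex {B : Set ℂ} (hB : IsOpen B) (hconv : Convex ℝ B)
    {k : ℂ → ℂ} (hk : DifferentiableOn ℂ k B) (h0 : ∀ z ∈ B, deriv k z = 0) :
    ∀ x ∈ B, ∀ y ∈ B, k x = k y := by
  intro x hx y hy
  refine hconv.is_const_of_fderivWithin_eq_zero hk (fun z hz => ?_) hx hy
  have hd : HasFDerivAt k (ContinuousLinearMap.smulRight (1 : ℂ →L[ℂ] ℂ) (0:ℂ)) z := by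
    have := (hk.differentiableAt (hB.mem_nhds hz)).hasDerivAt
    rw [h0 z hz] at this
    exact this.hasFDerivAt
  rw [fderivWithin_of_isOpen hB hz, hd.fderiv]
  ext w; simp


/-- a holomorphic function with zero derivative on a preconnected open set is constant -/
lemma const_on_connected {U : Set ℂ} (hU : IsOpen U) (hconn : IsPreconnected U)
    {k : ℂ → ℂ} (hk : DifferentiableOn ℂ k U) (h0 : ∀ z ∈ U, deriv k z = 0)
    {z₀ : ℂ} (hz₀ : z₀ ∈ U) : ∀ z ∈ U, k z = k z₀ := by
  have hak : AnalyticOnNhd ℂ k U := hk.analyticOnNhd hU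
  have heq : Set.EqOn k (fun _ => k z₀) U := by
    apply hak.eqOn_of_preconnected_of_eventuallyEq analyticOnNhd_const hconn hz₀
    obtain ⟨ε, hε, hball⟩ := Metric.mem_nhds_iff.1 (hU.mem_nhds hz₀)
    have hconst := const_on_convex Metric.isOpen_ball (convex_ball z₀ ε)
      (hk.mono hball) (fun w hw => h0 w (hball hw))
    exact Filter.eventually_iff_exists_mem.2 ⟨Metric.ball z₀ ε, Metric.ball_mem_nhds z₀ hε,
      fun w hw => hconst w hw z₀ (Metric.mem_ball_self hε)⟩
  exact fun z hz => heq hz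

/-- Proposition 2.3: for holomorphic f, g, h on a connected open U with
g nonconstant, ⟨1,f⟩ + ⟨g,h⟩ ≡ 0 iff h = i c₁ g + z₁ and f = −z̄₁ g + i c₂. -/
theorem stmt_4 (U : Set ℂ) (hU : IsOpen U) (hconn : IsConnected U)
    (f g h : ℂ → ℂ)
    (hf : DifferentiableOn ℂ f U) (hg : DifferentiableOn ℂ g U)
    (hh : DifferentiableOn ℂ h U)
    (hgnc : ¬ ∃ w : ℂ, ∀ z ∈ U, g z = w) :
    (∀ z ∈ U, inn 1 (f z) + inn (g z) (h z) = 0)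
      ↔ ∃ (c₁ c₂ : ℝ) (z₁ : ℂ), ∀ z ∈ U,
          h z = Complex.I * (c₁ : ℂ) * g z + z₁ ∧
          f z = -(starRingEnd ℂ) z₁ * g z + Complex.I * (c₂ : ℂ) := by
  constructor
  · intro hyp
    -- analyticity
    have haf : AnalyticOnNhd ℂ f U := hf.analyticOnNhd hU
    have hag : AnalyticOnNhd ℂ g U := hg.analyticOnNhd hU
    have hah : AnalyticOnNhd ℂ h U := hh.analyticOnNhd hU
    have haf' : AnalyticOnNhd ℂ (deriv f) U := haf.deriv
    have hag' : AnalyticOnNhd ℂ (deriv g) U := hag.deriv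
    have hah' : AnalyticOnNhd ℂ (deriv h) U := hah.deriv
    -- HasDerivAt facts at points of U
    have Hf : ∀ z ∈ U, HasDerivAt f (deriv f z) z := fun z hz =>
      (hf.differentiableAt (hU.mem_nhds hz)).hasDerivAt
    have Hg : ∀ z ∈ U, HasDerivAt g (deriv g z) z := fun z hz =>
      (hg.differentiableAt (hU.mem_nhds hz)).hasDerivAt
    have Hh : ∀ z ∈ U, HasDerivAt h (deriv h z) z := fun z hz =>
      (hh.differentiableAt (hU.mem_nhds hz)).hasDerivAt
    have Hf' : ∀ z ∈ U, HasDerivAt (deriv f) (deriv (deriv f) z) z := fun z hz =>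
      ((haf' z hz).differentiableAt).hasDerivAt
    have Hg' : ∀ z ∈ U, HasDerivAt (deriv g) (deriv (deriv g) z) z := fun z hz =>
      ((hag' z hz).differentiableAt).hasDerivAt
    have Hh' : ∀ z ∈ U, HasDerivAt (deriv h) (deriv (deriv h) z) z := fun z hz =>
      ((hah' z hz).differentiableAt).hasDerivAt
    -- the hypothesis as vanishing of a real part
    have hF0 : ∀ z ∈ U, (f z + (starRingEnd ℂ) (g z) * h z).re = 0 := by
      intro z hz
      have := hyp z hz
      simpa [inn, Complex.add_re] using this
    -- Step A1 : f' + conj g * h' + g' * conj h = 0 on U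
    have stepA1 : ∀ z ∈ U, deriv f z + (starRingEnd ℂ) (g z) * deriv h z
        + deriv g z * (starRingEnd ℂ) (h z) = 0 := by
      intro z hz
      obtain ⟨L, hL, hLval⟩ := hasFDerivAt_comb (Hf z hz) (Hg z hz) (Hh z hz)
      have h0 : ∀ᶠ w in nhds z, (f w + (starRingEnd ℂ) (g w) * h w).re = 0 :=
        Filter.eventually_iff_exists_mem.2 ⟨U, hU.mem_nhds hz, hF0⟩
      have key := re_deriv_zero hL h0
      have h1 := key 1
      have h2 := key Complex.I
      rw [hLval 1] at h1
      rw [hLval Complex.I] at h2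
      set a := deriv f z; set b := deriv g z; set c := deriv h z
      simp only [Complex.ext_iff, Complex.add_re, Complex.add_im, Complex.mul_re,
        Complex.mul_im, Complex.conj_re, Complex.conj_im, Complex.I_re, Complex.I_im,
        Complex.one_re, Complex.one_im, Complex.zero_re, Complex.zero_im,
        mul_one, mul_zero, one_mul, zero_mul] at h1 h2 ⊢
      constructor <;> nlinarith [h1, h2]
    -- Step A2 : Re(conj g' * h') = 0 on U
    have stepA2 : ∀ z ∈ U, ((starRingEnd ℂ) (deriv g z) * deriv h z).re = 0 := by
      intro z hz
      obtain ⟨L, hL, hLval⟩ :=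
        hasFDerivAt_comb2 (Hf' z hz) (Hg z hz) (Hh' z hz) (Hg' z hz) (Hh z hz)
      have h0 : ∀ᶠ w in nhds z, (deriv f w + (starRingEnd ℂ) (g w) * deriv h w
          + deriv g w * (starRingEnd ℂ) (h w)) = 0 :=
        Filter.eventually_iff_exists_mem.2 ⟨U, hU.mem_nhds hz, stepA1⟩
      have key := full_deriv_zero hL h0
      have h1 := key 1
      have h2 := key Complex.I
      rw [hLval 1] at h1
      rw [hLval Complex.I] at h2
      simp only [Complex.ext_iff, Complex.add_re, Complex.add_im, Complex.mul_re,
        Complex.mul_im, Complex.conj_re, Complex.conj_im, Complex.I_re, Complex.I_im,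
        Complex.one_re, Complex.one_im, Complex.zero_re, Complex.zero_im,
        mul_one, mul_zero, one_mul, zero_mul] at h1 h2 ⊢
      nlinarith [h1.1, h1.2, h2.1, h2.2]
    -- Step B : there is a point where deriv g ≠ 0
    obtain ⟨z₀', hz₀'U⟩ := hconn.nonempty
    have stepB : ∃ z₀ ∈ U, deriv g z₀ ≠ 0 := by
      by_contra hcon
      push_neg at hcon
      apply hgnc
      refine ⟨g z₀', fun z hz => ?_⟩
      have heq : Set.EqOn g (fun _ => g z₀') U := by
        apply hag.eqOn_of_preconnected_of_eventuallyEq analyticOnNhd_const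
          hconn.isPreconnected hz₀'U
        obtain ⟨ε, hε, hball⟩ := Metric.mem_nhds_iff.1 (hU.mem_nhds hz₀'U)
        have hconst := const_on_convex Metric.isOpen_ball (convex_ball z₀' ε)
          (hg.mono hball) (fun w hw => hcon w (hball hw))
        have : ∀ᶠ w in nhds z₀', g w = g z₀' :=
          Filter.eventually_iff_exists_mem.2 ⟨Metric.ball z₀' ε,
            Metric.ball_mem_nhds z₀' hε,
            fun w hw => hconst w hw z₀' (Metric.mem_ball_self hε)⟩
        exact this
      exact heq hz
    obtain ⟨z₀, hz₀U, hgz₀⟩ := stepB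
    -- Step C : ball around z₀ where deriv g ≠ 0
    have hcont : ContinuousAt (deriv g) z₀ := (hag' z₀ hz₀U).continuousAt
    have hev : ∀ᶠ w in nhds z₀, w ∈ U ∧ deriv g w ≠ 0 :=
      (hU.eventually_mem hz₀U).and (hcont.eventually_ne hgz₀)
    obtain ⟨ε, hε, hball⟩ := Metric.eventually_nhds_iff_ball.1 hev
    set B := Metric.ball z₀ ε with hBdef
    have hBU : B ⊆ U := fun w hw => (hball w hw).1
    have hBg' : ∀ w ∈ B, deriv g w ≠ 0 := fun w hw => (hball w hw).2
    have hz₀B : z₀ ∈ B := Metric.mem_ball_self hε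
    -- the quotient r = h'/g' on B
    set r : ℂ → ℂ := fun w => deriv h w / deriv g w with hrdef
    have hrdiff : DifferentiableOn ℂ r B :=
      DifferentiableOn.div (hah'.differentiableOn.mono hBU)
        (hag'.differentiableOn.mono hBU) hBg'
    have hrre : ∀ w ∈ B, (r w).re = 0 := by
      intro w hw
      have hA2 := stepA2 w (hBU hw)
      simp only [Complex.mul_re, Complex.conj_re, Complex.conj_im, neg_mul, sub_neg_eq_add] at hA2
      simp only [hrdef, Complex.div_re]
      rw [← add_div, div_eq_zero_iff]
      left; linarith
    have hrderiv : ∀ w ∈ B, deriv r w = 0 :=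
      deriv_zero_of_re_zero Metric.isOpen_ball hrdiff hrre
    set c : ℂ := r z₀ with hcdef
    have hcre : c.re = 0 := hrre z₀ hz₀B
    have hconjc : (starRingEnd ℂ) c = -c := by
      apply Complex.ext <;> simp [hcre]
    have hrconst : ∀ w ∈ B, r w = c := fun w hw =>
      const_on_convex Metric.isOpen_ball (convex_ball z₀ ε) hrdiff hrderiv w hw z₀ hz₀B
    -- identity theorem: h' = c g' on U
    have hDzero : ∀ z ∈ U, deriv h z = c * deriv g z := by
      have hD : AnalyticOnNhd ℂ (fun w => deriv h w - c * deriv g w) U :=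
        hah'.sub (analyticOnNhd_const.mul hag')
      have hDeq : Set.EqOn (fun w => deriv h w - c * deriv g w) 0 U := by
        apply hD.eqOn_zero_of_preconnected_of_eventuallyEq_zero hconn.isPreconnected hz₀U
        refine Filter.eventually_iff_exists_mem.2 ⟨B, Metric.ball_mem_nhds z₀ hε, fun w hw => ?_⟩
        have := hrconst w hw
        rw [hrdef] at this
        simp only [div_eq_iff (hBg' w hw)] at this
        simp [this]
      intro z hz
      have := hDeq hz
      simp only [Pi.zero_apply, sub_eq_zero] at this
      exact this
    -- h - c g is constant on U
    set z₁ : ℂ := h z₀ - c * g z₀ with hz₁def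
    have hhz : ∀ z ∈ U, h z = c * g z + z₁ := by
      have hKdiff : DifferentiableOn ℂ (fun w => h w - c * g w) U :=
        hh.sub ((differentiableOn_const c).mul hg)
      have hK0 : ∀ z ∈ U, deriv (fun w => h w - c * g w) z = 0 := by
        intro z hz
        have hK : HasDerivAt (fun w => h w - c * g w) (deriv h z - c * deriv g z) z :=
          (Hh z hz).sub ((Hg z hz).const_mul c)
        rw [hK.deriv, hDzero z hz]; ring
      have := const_on_connected hU hconn.isPreconnected hKdiff hK0 hz₀U
      intro z hz
      have h2 := this z hz
      rw [hz₁def]; linear_combination h2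
    -- f + conj z₁ * g is constant on U
    have hf'eq : ∀ z ∈ U, deriv f z + (starRingEnd ℂ) z₁ * deriv g z = 0 := by
      intro z hz
      have hA1 := stepA1 z hz
      rw [hDzero z hz, hhz z hz] at hA1
      simp only [map_add, map_mul, hconjc] at hA1
      linear_combination hA1
    set w₀ : ℂ := f z₀ + (starRingEnd ℂ) z₁ * g z₀ with hw₀def
    have hfz : ∀ z ∈ U, f z + (starRingEnd ℂ) z₁ * g z = w₀ := by
      have hMdiff : DifferentiableOn ℂ (fun w => f w + (starRingEnd ℂ) z₁ * g w) U :=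
        hf.add ((differentiableOn_const _).mul hg)
      have hM0 : ∀ z ∈ U, deriv (fun w => f w + (starRingEnd ℂ) z₁ * g w) z = 0 := by
        intro z hz
        have hM : HasDerivAt (fun w => f w + (starRingEnd ℂ) z₁ * g w)
            (deriv f z + (starRingEnd ℂ) z₁ * deriv g z) z :=
          (Hf z hz).add ((Hg z hz).const_mul _)
        rw [hM.deriv, hf'eq z hz]
      exact fun z hz => const_on_connected hU hconn.isPreconnected hMdiff hM0 hz₀U z hz
    have hw₀re : w₀.re = 0 := by
      have hF := hF0 z₀ hz₀U
      have hh0 := hhz z₀ hz₀U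
      rw [hh0] at hF
      rw [hw₀def]
      simp only [Complex.add_re, Complex.mul_re, Complex.mul_im, Complex.add_im,
        Complex.conj_re, Complex.conj_im, hcre] at hF ⊢
      nlinarith [hF]
    refine ⟨c.im, w₀.im, z₁, fun z hz => ⟨?_, ?_⟩⟩
    · have hcI : Complex.I * (c.im : ℂ) = c := by
        apply Complex.ext <;> simp [hcre]
      rw [hcI]
      exact hhz z hz
    · have hwI : Complex.I * (w₀.im : ℂ) = w₀ := by
        apply Complex.ext <;> simp [hw₀re]
      rw [hwI]
      have := hfz z hz
      linear_combination this
  · rintro ⟨c₁, c₂, z₁, hz⟩ z hzU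
    obtain ⟨e1, e2⟩ := hz z hzU
    rw [e1, e2]
    simp [inn, Complex.add_re, Complex.mul_re, Complex.mul_im, Complex.conj_re,
      Complex.conj_im, Complex.I_re, Complex.I_im]
    ring
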